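/- Let u : ℝ² → ℝ be a harmonic function on all of ℝ² satisfying u(x) = O(log |x|) as |x| → ∞. Then u is constant. -/

import Mathlib

open Complex Metric Set Filter intervalIntegral

noncomputable section LiouvilleAux

/-- decomposition of a real-linear map on `ℂ` via the basis `1, I`. -/
lemma clm_decomp {M : Type*} [AddCommGroup M] [Module ℝ M] [TopologicalSpace M]
    (L : ℂ →L[ℝ] M) (w : ℂ) : L w = w.re • L 1 + w.im • L I := by
  have hw : w = w.re • (1 : ℂ) + w.im • I := by
    simp [Complex.real_smul, Complex.re_add_im]
  conv_lhs => rw [hw]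
  rw [map_add, map_smul, map_smul]

/-- the "complex gradient" `∂v/∂x - i ∂v/∂y`. -/
def grad2 (v : ℂ → ℝ) (z : ℂ) : ℂ :=
  (fderiv ℝ v z 1 : ℂ) - (fderiv ℝ v z I : ℂ) * I

lemma diff_grad2 {v : ℂ → ℝ} (hv : ContDiff ℝ 2 v)
    (hlap : ∀ z, fderiv ℝ (fderiv ℝ v) z 1 1 + fderiv ℝ (fderiv ℝ v) z I I = 0) :
    Differentiable ℂ (grad2 v) := by
  intro z
  have hdv : Differentiable ℝ v := hv.differentiable two_ne_zero
  have hdv' : Differentiable ℝ (fderiv ℝ v) :=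
    (hv.fderiv_right (m := 1) (by norm_num)).differentiable one_ne_zero
  set A := fderiv ℝ (fderiv ℝ v) z with hAdef
  have hA : HasFDerivAt (fderiv ℝ v) A z := (hdv' z).hasFDerivAt
  have h1 : HasFDerivAt (fun y => fderiv ℝ v y 1) (A.flip 1) z := by
    simpa using hA.clm_apply (hasFDerivAt_const (1 : ℂ) z)
  have h2 : HasFDerivAt (fun y => fderiv ℝ v y I) (A.flip I) z := by
    simpa using hA.clm_apply (hasFDerivAt_const (I : ℂ) z)
  have hg : HasFDerivAt (grad2 v)
      (Complex.ofRealCLM.comp (A.flip 1) - (A.flip I).smulRight I) z := by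
    have h1' := Complex.ofRealCLM.hasFDerivAt.comp z h1
    have h2' := h2.smul_const I
    refine (h1'.sub h2').congr_of_eventuallyEq (Filter.Eventually.of_forall fun y => ?_)
    simp [grad2, Complex.real_smul]
  have hsym : ∀ a b : ℂ, A a b = A b a := fun a b =>
    second_derivative_symmetric (fun y => (hdv y).hasFDerivAt) hA a b
  have hlap' : A I I = - A 1 1 := by have := hlap z; rw [← hAdef] at this; linarith
  set c : ℂ := (A 1 1 : ℂ) - (A 1 I : ℂ) * I with hc
  have key : (Complex.ofRealCLM.comp (A.flip 1) - (A.flip I).smulRight I)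
      = (c • (1 : ℂ →L[ℂ] ℂ)).restrictScalars ℝ := by
    apply ContinuousLinearMap.ext
    intro w
    have hwA : A w = w.re • A 1 + w.im • A I := clm_decomp A w
    have hw1 : A w 1 = w.re * A 1 1 + w.im * A 1 I := by
      rw [hwA]; simp [hsym I 1, smul_eq_mul]
    have hwI : A w I = w.re * A 1 I - w.im * A 1 1 := by
      rw [hwA]; simp [hlap', smul_eq_mul]; ring
    simp only [ContinuousLinearMap.sub_apply, ContinuousLinearMap.comp_apply,
      ContinuousLinearMap.flip_apply, ContinuousLinearMap.smulRight_apply,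
      ContinuousLinearMap.coe_restrictScalars', ContinuousLinearMap.smul_apply,
      ContinuousLinearMap.one_apply, Complex.ofRealCLM_apply, hw1, hwI, hc,
      smul_eq_mul, Complex.real_smul]
    apply Complex.ext <;> simp <;> ring
  have : HasFDerivAt (grad2 v) (c • (1 : ℂ →L[ℂ] ℂ)) z :=
    hasFDerivAt_of_restrictScalars ℝ hg key.symm
  exact this.differentiableAt

/-- Primitive via axis-parallel path integrals. -/
def primF (g : ℂ → ℂ) (z : ℂ) : ℂ :=
  (∫ t in (0:ℝ)..z.re, g t) + I • ∫ t in (0:ℝ)..z.im, g (z.re + t * I)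

lemma abs_sub_le_of_uIoc {a b t : ℝ} (ht : t ∈ Set.uIoc a b) : |t - a| ≤ |b - a| := by
  rcases Set.mem_uIoc.mp ht with ⟨h1, h2⟩ | ⟨h1, h2⟩
  · rw [_root_.abs_of_nonneg (by linarith), _root_.abs_of_nonneg (by linarith)]; linarith
  · rw [_root_.abs_of_nonpos (by linarith), _root_.abs_of_nonpos (by linarith)]; linarith

lemma primF_hasDerivAt {g : ℂ → ℂ} (hg : Differentiable ℂ g) (z : ℂ) :
    HasDerivAt (primF g) (g z) z := by
  have hgc : Continuous g := hg.continuous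
  have hint : ∀ (a b y : ℝ), IntervalIntegrable (fun t : ℝ => g (t + y * I))
      MeasureTheory.volume a b := fun a b y =>
    (hgc.comp (by continuity)).intervalIntegrable a b
  have hint0 : ∀ a b : ℝ, IntervalIntegrable (fun t : ℝ => g t)
      MeasureTheory.volume a b := fun a b =>
    (hgc.comp Complex.continuous_ofReal).intervalIntegrable a b
  have hintv : ∀ (a b x : ℝ), IntervalIntegrable (fun t : ℝ => g (x + t * I))
      MeasureTheory.volume a b := fun a b x =>
    (hgc.comp (by continuity)).intervalIntegrable a b
  have key : ∀ w : ℂ, primF g w - primF g z =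
      (∫ t in z.re..w.re, g (t + w.im * I)) + I • ∫ t in z.im..w.im, g (z.re + t * I) := by
    intro w
    have rect := Complex.integral_boundary_rect_eq_zero_of_differentiableOn g
      (z.re : ℂ) w (hg.differentiableOn)
    simp only [Complex.ofReal_re, Complex.ofReal_im, Complex.ofReal_zero, zero_mul,
      add_zero, Complex.ofReal_one] at rect
    have e1 : (∫ t in (0:ℝ)..z.re, g t) + ∫ t in z.re..w.re, g t
        = ∫ t in (0:ℝ)..w.re, g t :=
      intervalIntegral.integral_add_adjacent_intervals (hint0 0 z.re) (hint0 z.re w.re)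
    have e2 : (∫ t in (0:ℝ)..z.im, g (z.re + t * I)) + ∫ t in z.im..w.im, g (z.re + t * I)
        = ∫ t in (0:ℝ)..w.im, g (z.re + t * I) :=
      intervalIntegral.integral_add_adjacent_intervals (hintv 0 z.im z.re) (hintv z.im w.im z.re)
    have hzero : (∫ t in z.re..w.re, g ((t : ℝ) + (0:ℝ) * I)) = ∫ t in z.re..w.re, g t := by
      simp
    simp only [smul_eq_mul] at rect
    simp only [primF, smul_eq_mul]
    linear_combination rect - e1 - I * e2
  rw [hasDerivAt_iff_isLittleO, Asymptotics.isLittleO_iff]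
  intro ε hε
  have hε2 : 0 < ε / 2 := by linarith
  obtain ⟨δ, hδ0, hδ⟩ := Metric.continuousAt_iff.mp (hgc.continuousAt (x := z)) (ε / 2) hε2
  filter_upwards [Metric.ball_mem_nhds z (half_pos hδ0)] with w hw
  rw [Metric.mem_ball, dist_eq_norm] at hw
  have hre : |w.re - z.re| ≤ ‖w - z‖ := by
    simpa using Complex.abs_re_le_norm (w - z)
  have him : |w.im - z.im| ≤ ‖w - z‖ := by
    simpa using Complex.abs_im_le_norm (w - z)
  -- rewrite the difference
  have hwz : (w - z) = ((w.re : ℂ) - z.re) + ((w.im : ℂ) - z.im) * I := by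
    simp [Complex.ext_iff]
  have iden : primF g w - primF g z - (w - z) • g z =
      (∫ t in z.re..w.re, (g (t + w.im * I) - g z)) +
        I • ∫ t in z.im..w.im, (g (z.re + t * I) - g z) := by
    rw [key w, intervalIntegral.integral_sub (hint z.re w.re w.im) intervalIntegrable_const,
      intervalIntegral.integral_sub (hintv z.im w.im z.re) intervalIntegrable_const,
      intervalIntegral.integral_const, intervalIntegral.integral_const]
    simp only [smul_eq_mul, Complex.real_smul]
    push_cast
    linear_combination (-(g z)) * hwz
  rw [iden]
  have b1 : ‖∫ t in z.re..w.re, (g (t + w.im * I) - g z)‖ ≤ ε / 2 * |w.re - z.re| := by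
    apply intervalIntegral.norm_integral_le_of_norm_le_const
    intro t ht
    have h1 : |t - z.re| ≤ |w.re - z.re| := abs_sub_le_of_uIoc ht
    have hd : dist ((t : ℂ) + w.im * I) z < δ := by
      rw [dist_eq_norm]
      have : ((t : ℂ) + w.im * I) - z = ((t - z.re : ℝ) : ℂ) + ((w.im - z.im : ℝ) : ℂ) * I := by
        simp [Complex.ext_iff]
      rw [this]
      calc ‖((t - z.re : ℝ) : ℂ) + ((w.im - z.im : ℝ) : ℂ) * I‖
          ≤ ‖((t - z.re : ℝ) : ℂ)‖ + ‖((w.im - z.im : ℝ) : ℂ) * I‖ := norm_add_le _ _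
        _ = |t - z.re| + |w.im - z.im| := by
            rw [norm_mul, Complex.norm_I, mul_one, Complex.norm_real, Complex.norm_real,
              Real.norm_eq_abs, Real.norm_eq_abs]
        _ < δ := by
            have := hre.trans hw.le
            have := him.trans hw.le
            linarith [h1.trans (hre.trans hw.le)]
    have := hδ hd
    rw [dist_eq_norm] at this
    exact this.le
  have b2 : ‖∫ t in z.im..w.im, (g (z.re + t * I) - g z)‖ ≤ ε / 2 * |w.im - z.im| := by
    apply intervalIntegral.norm_integral_le_of_norm_le_const
    intro t ht
    have h1 : |t - z.im| ≤ |w.im - z.im| := abs_sub_le_of_uIoc ht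
    have hd : dist ((z.re : ℂ) + t * I) z < δ := by
      rw [dist_eq_norm]
      have : ((z.re : ℂ) + t * I) - z = ((t - z.im : ℝ) : ℂ) * I := by
        simp [Complex.ext_iff]
      rw [this]
      have : ‖((t - z.im : ℝ) : ℂ) * I‖ = |t - z.im| := by
        rw [norm_mul, Complex.norm_I, mul_one, Complex.norm_real, Real.norm_eq_abs]
      rw [this]
      exact lt_of_le_of_lt (h1.trans him) (hw.trans (by linarith))
    have := hδ hd
    rw [dist_eq_norm] at this
    exact this.le
  calc ‖(∫ t in z.re..w.re, (g (t + w.im * I) - g z)) +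
        I • ∫ t in z.im..w.im, (g (z.re + t * I) - g z)‖
      ≤ ‖∫ t in z.re..w.re, (g (t + w.im * I) - g z)‖ +
        ‖I • ∫ t in z.im..w.im, (g (z.re + t * I) - g z)‖ := norm_add_le _ _
    _ ≤ ε / 2 * |w.re - z.re| + ε / 2 * |w.im - z.im| := by
        rw [norm_smul]
        simp only [Complex.norm_I, one_mul]
        exact add_le_add b1 b2
    _ ≤ ε / 2 * ‖w - z‖ + ε / 2 * ‖w - z‖ := by
        have := mul_le_mul_of_nonneg_left hre hε2.le
        have := mul_le_mul_of_nonneg_left him hε2.le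
        gcongr
    _ = ε * ‖w - z‖ := by ring

lemma primF_zero (g : ℂ → ℂ) : primF g 0 = 0 := by
  simp [primF]

lemma re_primF {v : ℂ → ℝ} (hv : ContDiff ℝ 2 v)
    (hF : ∀ z, HasDerivAt (primF (grad2 v)) (grad2 v z) z) (z : ℂ) :
    (primF (grad2 v) z).re = v z - v 0 := by
  have hdv : Differentiable ℝ v := hv.differentiable two_ne_zero
  have hFd : Differentiable ℝ (primF (grad2 v)) := fun y =>
    ((hF y).differentiableAt).restrictScalars ℝ
  have hψd : Differentiable ℝ (fun y => v y - (primF (grad2 v) y).re) :=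
    hdv.sub (Complex.reCLM.differentiable.comp hFd)
  have hzero : ∀ w, fderiv ℝ (fun y => v y - (primF (grad2 v) y).re) w = 0 := by
    intro w
    have hFw : HasFDerivAt (primF (grad2 v))
        ((ContinuousLinearMap.smulRight (1 : ℂ →L[ℂ] ℂ) (grad2 v w)).restrictScalars ℝ) w :=
      ((hF w).hasFDerivAt).restrictScalars ℝ
    have h2 := Complex.reCLM.hasFDerivAt.comp w hFw
    have hψ := ((hdv w).hasFDerivAt).sub h2
    have hψ' : HasFDerivAt (fun y => v y - (primF (grad2 v) y).re)
        (fderiv ℝ v w - Complex.reCLM.comp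
          ((ContinuousLinearMap.smulRight (1 : ℂ →L[ℂ] ℂ) (grad2 v w)).restrictScalars ℝ)) w := hψ
    rw [hψ'.fderiv]
    apply ContinuousLinearMap.ext
    intro x
    rw [clm_decomp]
    have e1 : (fderiv ℝ v w - Complex.reCLM.comp
        ((ContinuousLinearMap.smulRight (1 : ℂ →L[ℂ] ℂ) (grad2 v w)).restrictScalars ℝ)) 1
        = 0 := by
      simp [grad2]
    have e2 : (fderiv ℝ v w - Complex.reCLM.comp
        ((ContinuousLinearMap.smulRight (1 : ℂ →L[ℂ] ℂ) (grad2 v w)).restrictScalars ℝ)) I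
        = 0 := by
      simp [grad2, Complex.ext_iff]
    rw [e1, e2]
    simp
  have hconst := is_const_of_fderiv_eq_zero hψd hzero z 0
  rw [primF_zero] at hconst
  simp only [Complex.zero_re] at hconst
  linarith

/-- Borel–Caratheodory-type bound via the Schwarz lemma. -/
lemma borelCaratheodory {F : ℂ → ℂ} (hd : Differentiable ℂ F) (hF0 : F 0 = 0) {R A : ℝ}
    (hR : 0 < R) (hA : 0 < A)
    (hbound : ∀ z ∈ closedBall (0:ℂ) R, (F z).re ≤ A - 1) :
    ∀ z : ℂ, ‖z‖ ≤ R / 2 → ‖F z‖ ≤ 2 * A := by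
  have hAC : ((2 * A : ℝ) : ℂ).re = 2 * A := by simp
  set φ : ℂ → ℂ := fun z => F z / ((2 * A : ℝ) - F z) with hφ
  have hden : ∀ z ∈ ball (0:ℂ) R, ((2 * A : ℝ) : ℂ) - F z ≠ 0 := by
    intro z hz
    have hre : (F z).re ≤ A - 1 := hbound z (ball_subset_closedBall hz)
    intro h0
    have : (((2 * A : ℝ) : ℂ) - F z).re = 0 := by rw [h0]; simp
    rw [Complex.sub_re, hAC] at this
    linarith
  have habs : ∀ z ∈ ball (0:ℂ) R, ‖F z‖ < ‖((2 * A : ℝ) : ℂ) - F z‖ := by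
    intro z hz
    have hre : (F z).re ≤ A - 1 := hbound z (ball_subset_closedBall hz)
    have hsq : Complex.normSq (F z) < Complex.normSq (((2 * A : ℝ) : ℂ) - F z) := by
      rw [Complex.normSq_apply, Complex.normSq_apply, Complex.sub_re, Complex.sub_im, hAC]
      have him : (((2 * A : ℝ) : ℂ)).im = 0 := by simp
      rw [him]
      nlinarith [sq_nonneg ((F z).im)]
    have := Real.sqrt_lt_sqrt (Complex.normSq_nonneg _) hsq
    rwa [← Complex.norm_def, ← Complex.norm_def] at this
  have hφd : DifferentiableOn ℂ φ (ball 0 R) :=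
    DifferentiableOn.div hd.differentiableOn
      (((differentiable_const _).sub hd).differentiableOn) hden
  have hφ0 : φ 0 = 0 := by simp [hφ, hF0]
  have hmaps : MapsTo φ (ball (0:ℂ) R) (ball (φ 0) 1) := by
    intro z hz
    rw [hφ0, mem_ball, dist_zero_right]
    have h1 := habs z hz
    have h2 : 0 < ‖((2 * A : ℝ) : ℂ) - F z‖ := lt_of_le_of_lt (norm_nonneg _) h1
    simp only [hφ, norm_div]
    rw [div_lt_one h2]
    exact h1
  intro z hz
  have hz' : z ∈ ball (0:ℂ) R := by
    rw [mem_ball, dist_zero_right]; linarith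
  have hsch := Complex.dist_le_div_mul_dist_of_mapsTo_ball hφd (hmaps.mono_right ball_subset_closedBall) hz'
  rw [hφ0, dist_zero_right, dist_zero_right] at hsch
  have hφle : ‖φ z‖ ≤ 1 / 2 := by
    have h1 : (1 : ℝ) / R * ‖z‖ ≤ 1 / R * (R / 2) := by
      apply mul_le_mul_of_nonneg_left hz
      positivity
    have h2 : (1 : ℝ) / R * (R / 2) = 1 / 2 := by field_simp
    linarith [hsch]
  have hFeq : F z = φ z * (((2 * A : ℝ) : ℂ) - F z) :=
    (div_mul_cancel₀ _ (hden z hz')).symm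
  have hnorm1 : ‖((2 * A : ℝ) : ℂ) - F z‖ ≤ 2 * A + ‖F z‖ := by
    calc ‖((2 * A : ℝ) : ℂ) - F z‖ ≤ ‖((2 * A : ℝ) : ℂ)‖ + ‖F z‖ := norm_sub_le _ _
      _ = 2 * A + ‖F z‖ := by rw [Complex.norm_real, Real.norm_eq_abs, abs_of_pos (by linarith)]
  have hfin : ‖F z‖ ≤ 1 / 2 * (2 * A + ‖F z‖) := by
    calc ‖F z‖ = ‖φ z‖ * ‖((2 * A : ℝ) : ℂ) - F z‖ := by rw [← norm_mul, ← hFeq]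
      _ ≤ 1 / 2 * (2 * A + ‖F z‖) :=
        mul_le_mul hφle hnorm1 (norm_nonneg _) (by norm_num)
  linarith

lemma const_of_harmonic_log_growth {v : ℂ → ℝ} (hv : ContDiff ℝ 2 v)
    (hlap : ∀ z, fderiv ℝ (fderiv ℝ v) z 1 1 + fderiv ℝ (fderiv ℝ v) z I I = 0)
    {C M : ℝ} (hC : 0 < C) (hM : 0 < M)
    (hgr : ∀ z : ℂ, M ≤ ‖z‖ → |v z| ≤ C * Real.log ‖z‖) :
    ∀ z, v z = v 0 := by
  have hgd : Differentiable ℂ (grad2 v) := diff_grad2 hv hlap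
  have hF : ∀ z, HasDerivAt (primF (grad2 v)) (grad2 v z) z :=
    primF_hasDerivAt hgd
  have hFdiff : Differentiable ℂ (primF (grad2 v)) := fun z => (hF z).differentiableAt
  have hre := re_primF hv hF
  obtain ⟨K₀, hK₀⟩ := (isCompact_closedBall (0:ℂ) M).exists_bound_of_continuousOn
    (hv.continuous.continuousOn)
  have hK₀0 : 0 ≤ K₀ :=
    le_trans (norm_nonneg (v 0)) (hK₀ 0 (by simp [hM.le]))
  set K := K₀ + |v 0| with hKdef
  have hK0 : 0 ≤ K := by have := abs_nonneg (v 0); simp [hKdef]; linarith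
  have growthF : ∀ R, max M 2 ≤ R → ∀ z ∈ closedBall (0:ℂ) R,
      (primF (grad2 v) z).re ≤ C * Real.log R + K := by
    intro R hRge z hz
    have hR2 : (2:ℝ) ≤ R := le_trans (le_max_right M 2) hRge
    have hlogR : 0 ≤ Real.log R := Real.log_nonneg (by linarith)
    rw [hre z]
    rw [mem_closedBall, dist_zero_right] at hz
    rcases le_total ‖z‖ M with h | h
    · have h1 : ‖v z‖ ≤ K₀ := hK₀ z (by rwa [mem_closedBall, dist_zero_right])
      rw [Real.norm_eq_abs] at h1
      have h2 : v z ≤ K₀ := le_trans (le_abs_self _) h1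
      have := neg_abs_le (v 0)
      have := mul_nonneg hC.le hlogR
      simp only [hKdef]
      linarith
    · have h1 := hgr z h
      have h2 : v z ≤ C * Real.log ‖z‖ := le_trans (le_abs_self _) h1
      have h3 : Real.log ‖z‖ ≤ Real.log R := by
        gcongr
        exact lt_of_lt_of_le hM h
      have := mul_le_mul_of_nonneg_left h3 hC.le
      have := neg_abs_le (v 0)
      simp only [hKdef]
      linarith
  have gbound : ∀ z : ℂ, max M 2 ≤ ‖z‖ →
      ‖grad2 v z‖ ≤ 2 * (C * Real.log (4 * ‖z‖) + K + 1) / ‖z‖ := by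
    intro z hz
    have hz0 : 0 < ‖z‖ := lt_of_lt_of_le (by positivity) (le_trans (le_max_right M 2) hz)
    have hR4 : max M 2 ≤ 4 * ‖z‖ := le_trans hz (by linarith)
    have hlogR : 0 ≤ Real.log (4 * ‖z‖) :=
      Real.log_nonneg (by linarith [le_trans (le_max_right M 2) hR4])
    have hA : 0 < C * Real.log (4 * ‖z‖) + K + 1 := by
      have := mul_nonneg hC.le hlogR
      linarith
    have hb : ∀ w ∈ closedBall (0:ℂ) (4 * ‖z‖),
        (primF (grad2 v) w).re ≤ (C * Real.log (4 * ‖z‖) + K + 1) - 1 := by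
      intro w hw
      have := growthF (4 * ‖z‖) hR4 w hw
      linarith
    have hbc := borelCaratheodory hFdiff (primF_zero _) (by positivity) hA hb
    have hsph : ∀ w ∈ Metric.sphere z ‖z‖,
        ‖primF (grad2 v) w‖ ≤ 2 * (C * Real.log (4 * ‖z‖) + K + 1) := by
      intro w hw
      apply hbc
      rw [mem_sphere, dist_eq_norm] at hw
      have h1 : ‖w‖ ≤ 2 * ‖z‖ := by
        calc ‖w‖ = ‖w - z + z‖ := by ring_nf
          _ ≤ ‖w - z‖ + ‖z‖ := norm_add_le _ _
          _ = 2 * ‖z‖ := by rw [hw]; ring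
      linarith
    have hcau := Complex.norm_deriv_le_of_forall_mem_sphere_norm_le hz0
      hFdiff.diffContOnCl hsph
    rw [(hF z).deriv] at hcau
    exact hcau
  have hten : Filter.Tendsto (grad2 v) (Filter.cocompact ℂ) (nhds 0) := by
    rw [tendsto_zero_iff_norm_tendsto_zero]
    have hnt : Filter.Tendsto (fun z : ℂ => ‖z‖) (Filter.cocompact ℂ) atTop :=
      tendsto_norm_cocompact_atTop
    have hb : Filter.Tendsto (fun r : ℝ => 2 * (C * Real.log (4 * r) + K + 1) / r)
        atTop (nhds 0) := by
      have l1 : Filter.Tendsto (fun r : ℝ => Real.log r / r) atTop (nhds 0) :=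
        Real.isLittleO_log_id_atTop.tendsto_div_nhds_zero
      have l2 : Filter.Tendsto (fun r : ℝ => (2 * C * Real.log 4 + 2 * K + 2) / r)
          atTop (nhds 0) := tendsto_const_nhds.div_atTop Filter.tendsto_id
      have l3 := l2.add (l1.const_mul (2 * C))
      rw [show (0 : ℝ) + 2 * C * 0 = 0 by ring] at l3
      apply l3.congr'
      filter_upwards [Filter.eventually_ge_atTop 1] with r hr
      have hr0 : 0 < r := by linarith
      rw [Real.log_mul (by norm_num) (ne_of_gt hr0)]
      field_simp
      ring
    apply squeeze_zero' (Filter.Eventually.of_forall fun z => norm_nonneg _) ?_ (hb.comp hnt)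
    filter_upwards [hnt.eventually_ge_atTop (max M 2)] with z hz using gbound z hz
  have hgzero : ∀ z, grad2 v z = 0 := fun z =>
    hgd.apply_eq_of_tendsto_cocompact z hten
  have hfder : ∀ z, fderiv ℝ v z = 0 := by
    intro z
    have h := hgzero z
    rw [grad2, Complex.ext_iff] at h
    simp at h
    apply ContinuousLinearMap.ext
    intro w
    rw [clm_decomp]
    simp [h.1, h.2]
  exact fun z => is_const_of_fderiv_eq_zero (hv.differentiable two_ne_zero) hfder z 0

end LiouvilleAux

/-- The Laplacian of `u : ℝ² → ℝ`, as the sum of the second partial derivatives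
in the coordinate directions. -/
noncomputable def lap (u : EuclideanSpace ℝ (Fin 2) → ℝ) (x : EuclideanSpace ℝ (Fin 2)) : ℝ :=
  ∑ i : Fin 2,
    fderiv ℝ (fun y => fderiv ℝ u y (EuclideanSpace.single i 1)) x (EuclideanSpace.single i 1)

/-- generalized Liouville theorem: a function harmonic on all of `ℝ²`
satisfying `u(x) = O(log |x|)` as `|x| → ∞` is constant. -/
theorem stmt_2 (u : EuclideanSpace ℝ (Fin 2) → ℝ)
    (hreg : ContDiff ℝ 2 u)
    (hharm : ∀ x, lap u x = 0)
    (hgrowth : ∃ C M : ℝ, 0 < C ∧ 0 < M ∧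
      ∀ x : EuclideanSpace ℝ (Fin 2), M ≤ ‖x‖ → |u x| ≤ C * Real.log ‖x‖) :
    ∃ c : ℝ, ∀ x, u x = c := by
  obtain ⟨C, M, hC, hM, hgr⟩ := hgrowth
  set e : ℂ ≃L[ℝ] EuclideanSpace ℝ (Fin 2) :=
    Complex.orthonormalBasisOneI.repr.toContinuousLinearEquiv with hedef
  have hecoe : ∀ z : ℂ, e z = Complex.orthonormalBasisOneI.repr z := fun z => rfl
  have hnorm : ∀ z : ℂ, ‖e z‖ = ‖z‖ := fun z => by
    rw [hecoe]; exact Complex.orthonormalBasisOneI.repr.norm_map z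
  have hv : ContDiff ℝ 2 (u ∘ ⇑e) := hreg.comp e.contDiff
  have he1 : e 1 = EuclideanSpace.single 0 (1:ℝ) := by
    rw [hecoe]
    ext i
    rw [Complex.orthonormalBasisOneI_repr_apply]
    fin_cases i <;> simp [EuclideanSpace.single_apply]
  have heI : e Complex.I = EuclideanSpace.single 1 (1:ℝ) := by
    rw [hecoe]
    ext i
    rw [Complex.orthonormalBasisOneI_repr_apply]
    fin_cases i <;> simp [EuclideanSpace.single_apply]
  have hAu : ∀ x, HasFDerivAt (fderiv ℝ u) (fderiv ℝ (fderiv ℝ u) x) x := fun x =>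
    (((hreg.fderiv_right (m := 1) (by norm_num)).differentiable one_ne_zero) x).hasFDerivAt
  set Φ : (EuclideanSpace ℝ (Fin 2) →L[ℝ] ℝ) →L[ℝ] (ℂ →L[ℝ] ℝ) :=
    (ContinuousLinearMap.compL ℝ ℂ (EuclideanSpace ℝ (Fin 2)) ℝ).flip
      (e : ℂ →L[ℝ] EuclideanSpace ℝ (Fin 2)) with hΦdef
  have hfdv : (fderiv ℝ (u ∘ ⇑e)) = fun y => Φ (fderiv ℝ u (e y)) := by
    funext y
    rw [e.comp_right_fderiv]
    rfl
  have hsecond : ∀ (z w₁ w₂ : ℂ), fderiv ℝ (fderiv ℝ (u ∘ ⇑e)) z w₁ w₂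
      = fderiv ℝ (fderiv ℝ u) (e z) (e w₁) (e w₂) := by
    intro z w₁ w₂
    have h2 := (hAu (e z)).comp z e.hasFDerivAt
    have h1 : HasFDerivAt (fun y => Φ (fderiv ℝ u (e y)))
        (Φ.comp ((fderiv ℝ (fderiv ℝ u) (e z)).comp
          (e : ℂ →L[ℝ] EuclideanSpace ℝ (Fin 2)))) z := Φ.hasFDerivAt.comp z h2
    rw [hfdv, h1.fderiv]
    rfl
  have hlapv : ∀ z, fderiv ℝ (fderiv ℝ (u ∘ ⇑e)) z 1 1
      + fderiv ℝ (fderiv ℝ (u ∘ ⇑e)) z Complex.I Complex.I = 0 := by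
    intro z
    have key : ∀ (x c : EuclideanSpace ℝ (Fin 2)),
        fderiv ℝ (fun y => fderiv ℝ u y c) x = (fderiv ℝ (fderiv ℝ u) x).flip c := by
      intro x c
      rw [((hAu x).clm_apply (hasFDerivAt_const c x)).fderiv]
      ext w; simp
    have hh := hharm (e z)
    rw [lap, Fin.sum_univ_two, key, key] at hh
    rw [hsecond z 1 1, hsecond z Complex.I Complex.I, he1, heI]
    simpa using hh
  have hgr' : ∀ z : ℂ, M ≤ ‖z‖ → |(u ∘ ⇑e) z| ≤ C * Real.log ‖z‖ := fun z hz => by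
    have := hgr (e z) (by rwa [hnorm]); simpa [hnorm] using this
  have hconst := const_of_harmonic_log_growth hv hlapv hC hM hgr'
  refine ⟨u (e 0), fun x => ?_⟩
  have h := hconst (e.symm x)
  simpa using h
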